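/- Fix p ∈ [0,1] and define the sequence ρ_k by ρ_0 = 1 and ρ_{k+1} = 2p·ρ_k − (p·ρ_k)². Then: (i) if p ≤ 1/2, then ρ_k → 0 as k → ∞; (ii) if p > 1/2, then ρ_k → (2p − 1)/p², which is strictly positive. -/

import Mathlib

open Filter Finset

/-- The recursion `ρ₀ = 1`, `ρ_{k+1} = 2 p ρ_k - (p ρ_k)²`. -/
noncomputable def rho (p : ℝ) : ℕ → ℝ
  | 0 => 1
  | k + 1 => 2 * p * rho p k - (p * rho p k) ^ 2

lemma rho_key (p : ℝ) (hp0 : 0 ≤ p) (hp1 : p ≤ 1) (c : ℝ) (hc0 : 0 ≤ c) (hc1 : c ≤ 1)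
    (hfix : 2 * p * c - (p * c) ^ 2 = c) (hle : 2 * p - 1 ≤ p ^ 2 * c) :
    ∃ L : ℝ, Tendsto (rho p) atTop (nhds L) ∧ c ≤ L ∧
      2 * p * L - (p * L) ^ 2 = L := by
  have hbounds : ∀ k, c ≤ rho p k ∧ rho p k ≤ 1 := by
    intro k
    induction k with
    | zero => exact ⟨by simpa [rho] using hc1, le_of_eq rfl⟩
    | succ k ih =>
      obtain ⟨h1, h2⟩ := ih
      constructor
      · show c ≤ 2 * p * rho p k - (p * rho p k) ^ 2
        nlinarith [mul_nonneg (mul_nonneg (sub_nonneg.2 h1) hp0)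
          (by nlinarith : (0:ℝ) ≤ 2 - p * (rho p k + c))]
      · show 2 * p * rho p k - (p * rho p k) ^ 2 ≤ 1
        nlinarith [sq_nonneg (1 - p * rho p k)]
  have hanti : ∀ k, rho p (k + 1) ≤ rho p k := by
    intro k
    obtain ⟨h1, h2⟩ := hbounds k
    show 2 * p * rho p k - (p * rho p k) ^ 2 ≤ rho p k
    nlinarith [mul_nonneg (le_trans hc0 h1) (sub_nonneg.2 h1), sq_nonneg p]
  have hbdd : BddBelow (Set.range (rho p)) :=
    ⟨c, by rintro x ⟨k, rfl⟩; exact (hbounds k).1⟩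
  have hmono : Antitone (rho p) := antitone_nat_of_succ_le hanti
  have hT : Tendsto (rho p) atTop (nhds (⨅ k, rho p k)) :=
    tendsto_atTop_ciInf hmono hbdd
  refine ⟨⨅ k, rho p k, hT, le_ciInf fun k => (hbounds k).1, ?_⟩
  have h1 : Tendsto (fun k => rho p (k + 1)) atTop (nhds (⨅ k, rho p k)) :=
    hT.comp (tendsto_add_atTop_nat 1)
  have h2 : Tendsto (fun k => 2 * p * rho p k - (p * rho p k) ^ 2) atTop
      (nhds (2 * p * (⨅ k, rho p k) - (p * (⨅ k, rho p k)) ^ 2)) := by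
    exact ((tendsto_const_nhds.mul hT).sub ((tendsto_const_nhds.mul hT).pow 2))
  have heq : (fun k => rho p (k + 1)) = fun k => 2 * p * rho p k - (p * rho p k) ^ 2 := by
    funext k; rfl
  rw [heq] at h1
  exact tendsto_nhds_unique h2 h1

/-- **Percolation threshold.**  The threshold is `1/2`:
if `p ≤ 1/2` then `ρ_n → 0`; if `p > 1/2` then `ρ_n → (2p - 1)/p² > 0`. -/
theorem rho_tendsto (p : ℝ) (hp0 : 0 ≤ p) (hp1 : p ≤ 1) :
    (p ≤ 1 / 2 → Tendsto (rho p) atTop (nhds 0)) ∧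
    (1 / 2 < p →
      Tendsto (rho p) atTop (nhds ((2 * p - 1) / p ^ 2)) ∧ 0 < (2 * p - 1) / p ^ 2) := by
  constructor
  · intro hp
    obtain ⟨L, hT, hL0, hfix⟩ := rho_key p hp0 hp1 0 le_rfl zero_le_one
      (by ring) (by nlinarith)
    have k1 : (0:ℝ) ≤ p * L := mul_nonneg hp0 hL0
    have k2 : (0:ℝ) ≤ p * p * L := mul_nonneg (mul_nonneg hp0 hp0) hL0
    have hL : L = 0 := by nlinarith [sq_nonneg (p * L)]
    rwa [hL] at hT
  · intro hp
    have hp' : 0 < p := by linarith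
    have hp2 : 0 < p ^ 2 := by positivity
    set c := (2 * p - 1) / p ^ 2 with hc
    have hcpos : 0 < c := by
      apply div_pos (by linarith) hp2
    have hpc : p ^ 2 * c = 2 * p - 1 := by
      rw [hc]; field_simp
    have hc1 : c ≤ 1 := by
      rw [hc, div_le_one hp2]; nlinarith [sq_nonneg (p - 1)]
    obtain ⟨L, hT, hLc, hfix⟩ := rho_key p hp0 hp1 c hcpos.le hc1
      (by nlinarith) (by nlinarith)
    have hLpos : 0 < L := lt_of_lt_of_le hcpos hLc
    have hL : L = c := by
      have : p ^ 2 * L = 2 * p - 1 := by nlinarith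
      rw [hc]; field_simp; nlinarith
    exact ⟨hL ▸ hT, hcpos⟩
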